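/- Let n ≥ 1, s ∈ (0,1), and let K be a kernel with λ|z|^{−n−2s} ≤ K(z) ≤ Λ|z|^{−n−2s}. Let u : ℝⁿ → ℝ, let M ∈ ℝ with sup_{ℝⁿ} u < M, and define w := −log(M − u). Let x ∈ ℝⁿ be a point where u is differentiable, and assume that the integrands defining Lu(x) and Lw(x) are both Lebesgue integrable on ℝⁿ. Then Lw(x) ≥ Lu(x) / (M − u(x)). -/

import Mathlib

open MeasureTheory Filter
open scoped RealInnerProductSpace

noncomputable section

/-- The integrand of the integro-differential operator `L` at base point `x`. -/
def LIntegrand {n : ℕ} (K u : EuclideanSpace ℝ (Fin n) → ℝ)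
    (x z : EuclideanSpace ℝ (Fin n)) : ℝ :=
  (u (x + z) - u x - (if ‖z‖ ≤ 1 then ⟪gradient u x, z⟫ else 0)) * K z

/-- The symmetric translation-invariant integro-differential operator `L`. -/
def Lop {n : ℕ} (K u : EuclideanSpace ℝ (Fin n) → ℝ)
    (x : EuclideanSpace ℝ (Fin n)) : ℝ :=
  ∫ z, LIntegrand K u x z

/-- A symmetric measurable kernel with two-sided fractional bounds of order `2s`. -/
def IsKernel (n : ℕ) (s lam Lam : ℝ) (K : EuclideanSpace ℝ (Fin n) → ℝ) : Prop :=
  Measurable K ∧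
  (∀ z : EuclideanSpace ℝ (Fin n), z ≠ 0 → K (-z) = K z) ∧
  (∀ z : EuclideanSpace ℝ (Fin n), z ≠ 0 →
    lam * ‖z‖ ^ (-(n : ℝ) - 2 * s) ≤ K z ∧ K z ≤ Lam * ‖z‖ ^ (-(n : ℝ) - 2 * s))


/-- **Bernstein transform comparison for `L`.**  If `sup u < M`,
`w := −log(M − u)`, `u` is differentiable at `x`, and the integrands defining
`Lu(x)` and `Lw(x)` are Lebesgue integrable, then `Lw(x) ≥ Lu(x)/(M − u(x))`. -/
theorem bernstein_operator_inequality
    (n : ℕ) (hn : 1 ≤ n) (s lam Lam : ℝ)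
    (hs0 : 0 < s) (hs1 : s < 1) (hlam : 0 < lam) (hlamLam : lam ≤ Lam)
    (K u : EuclideanSpace ℝ (Fin n) → ℝ) (hK : IsKernel n s lam Lam K)
    (M : ℝ) (hM : ∃ M₀ : ℝ, M₀ < M ∧ ∀ y, u y ≤ M₀)
    (w : EuclideanSpace ℝ (Fin n) → ℝ)
    (hw : w = fun y => -Real.log (M - u y))
    (x : EuclideanSpace ℝ (Fin n)) (hux : DifferentiableAt ℝ u x)
    (hIu : Integrable (LIntegrand K u x))
    (hIw : Integrable (LIntegrand K w x)) :
    Lop K w x ≥ Lop K u x / (M - u x) := by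
  obtain ⟨M₀, hM₀, hub⟩ := hM
  have hpos : ∀ y, 0 < M - u y := fun y => by linarith [hub y]
  set a : ℝ := M - u x with ha
  have ha0 : 0 < a := hpos x
  -- gradient of w
  have hfd : HasFDerivAt (fun y => M - u y) (-(fderiv ℝ u x)) x := by
    have h := (hasFDerivAt_const M x).sub hux.hasFDerivAt
    rw [zero_sub] at h
    exact h
  have hlog : HasFDerivAt (fun y => Real.log (M - u y))
      (a⁻¹ • (-(fderiv ℝ u x))) x := hfd.log (ne_of_gt ha0)
  have hfw : HasFDerivAt w (a⁻¹ • fderiv ℝ u x) x := by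
    rw [hw]
    have := hlog.neg
    rw [smul_neg, neg_neg] at this
    exact this
  have hgw : gradient w x = a⁻¹ • gradient u x := by
    have h1 : HasGradientAt w (a⁻¹ • gradient u x) x := by
      apply hasGradientAt_iff_hasFDerivAt.mpr
      have : (InnerProductSpace.toDual ℝ (EuclideanSpace ℝ (Fin n)))
          (a⁻¹ • gradient u x) = a⁻¹ • fderiv ℝ u x := by
        rw [LinearIsometryEquiv.map_smul]
        congr 1
        exact (InnerProductSpace.toDual ℝ _).apply_symm_apply (fderiv ℝ u x)
      rw [this]; exact hfw
    exact h1.gradient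
  -- pointwise inequality
  have key : ∀ z : EuclideanSpace ℝ (Fin n), z ≠ 0 →
      LIntegrand K u x z / a ≤ LIntegrand K w x z := by
    intro z hz
    have hKz : 0 ≤ K z := by
      have := (hK.2.2 z hz).1
      have hnorm : 0 < ‖z‖ ^ (-(n : ℝ) - 2 * s) :=
        Real.rpow_pos_of_pos (norm_pos_iff.mpr hz) _
      nlinarith
    set b : ℝ := M - u (x + z) with hb
    have hb0 : 0 < b := hpos (x + z)
    have hlogineq : (a - b) / a ≤ Real.log a - Real.log b := by
      have h1 : Real.log (b / a) ≤ b / a - 1 :=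
        Real.log_le_sub_one_of_pos (div_pos hb0 ha0)
      rw [Real.log_div (ne_of_gt hb0) (ne_of_gt ha0)] at h1
      have : (a - b) / a = 1 - b / a := by field_simp
      linarith [this ▸ (by linarith : Real.log a - Real.log b ≥ 1 - b / a)]
    have hwval : ∀ y, w y = -Real.log (M - u y) := fun y => by rw [hw]
    have hinner : (if ‖z‖ ≤ 1 then ⟪gradient w x, z⟫ else 0)
        = (if ‖z‖ ≤ 1 then ⟪gradient u x, z⟫ else 0) / a := by
      rw [hgw]
      by_cases h : ‖z‖ ≤ 1
      · simp only [h, if_true]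
        rw [real_inner_smul_left]
        ring
      · simp [h]
    have expand : LIntegrand K w x z - LIntegrand K u x z / a
        = (Real.log a - Real.log b - (a - b) / a) * K z := by
      unfold LIntegrand
      rw [hinner, hwval (x + z), hwval x]
      have hab : u (x + z) - u x = a - b := by rw [ha, hb]; ring
      rw [hab]
      ring
    nlinarith [mul_nonneg (by linarith : (0:ℝ) ≤ Real.log a - Real.log b - (a - b) / a) hKz]
  -- integrate
  have hIu' : Integrable (fun z => LIntegrand K u x z / a) := hIu.div_const a
  have hsub := hIw.sub hIu'
  have hae : ∀ᵐ z : EuclideanSpace ℝ (Fin n),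
      0 ≤ LIntegrand K w x z - LIntegrand K u x z / a := by
    haveI : Nonempty (Fin n) := ⟨⟨0, hn⟩⟩
    have h0 : (volume : Measure (EuclideanSpace ℝ (Fin n))) {0} = 0 :=
      measure_singleton 0
    filter_upwards [measure_eq_zero_iff_ae_notMem.mp h0] with z hz
    have := key z (by simpa using hz)
    linarith
  have hint : 0 ≤ ∫ z, (LIntegrand K w x z - LIntegrand K u x z / a) :=
    integral_nonneg_of_ae hae
  rw [integral_sub hIw hIu'] at hint
  rw [integral_div] at hint
  have : Lop K u x / a ≤ Lop K w x := by
    unfold Lop; linarith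
  exact this
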